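/- (Stability of PA-I.) Let u⁰ ∈ ℝ^m and let (U_n^k)_{n,k≥0} be a family of vectors in ℝ^m satisfying U_0^k = u⁰ for all k and the Parareal recurrence U_{n+1}^{k+1} = P_1·U_n^{k+1} + (P_{J_1} − P_1)·U_n^k for all n, k ≥ 0. Then for every n and k, ‖U_{n+1}^{k+1}‖ ≤ ‖u⁰‖ + (n+1)·max_{0≤j≤n} ‖U_j^k‖. -/

import Mathlib

/-- The m×m discrete Dirichlet Laplacian with mesh size `h`. -/
noncomputable def Dh (m : ℕ) (h : ℝ) : Matrix (Fin m) (Fin m) ℝ :=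
  Matrix.of fun i j =>
    if (i : ℕ) = (j : ℕ) then 1 / h ^ 2 * (-2)
    else if (i : ℕ) + 1 = (j : ℕ) ∨ (j : ℕ) + 1 = (i : ℕ) then 1 / h ^ 2 * 1
    else 0

/-- `Pmat m h ΔT ε i = (I − iΔT·D_h + ε²ΔT·D_h²)⁻¹ (I − iΔT·D_h)`. -/
noncomputable def Pmat (m : ℕ) (h ΔT ε : ℝ) (i : ℕ) : Matrix (Fin m) (Fin m) ℝ :=
  ((1 : Matrix (Fin m) (Fin m) ℝ) - ((i : ℝ) * ΔT) • Dh m h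
      + (ε ^ 2 * ΔT) • Dh m h ^ 2)⁻¹
    * ((1 : Matrix (Fin m) (Fin m) ℝ) - ((i : ℝ) * ΔT) • Dh m h)

/-- `PJmat m h ΔT ε J i = [(I − (iΔT/J)·D_h + ε²(ΔT/J)·D_h²)⁻¹ (I − (iΔT/J)·D_h)]^J`. -/
noncomputable def PJmat (m : ℕ) (h ΔT ε : ℝ) (J i : ℕ) : Matrix (Fin m) (Fin m) ℝ :=
  (((1 : Matrix (Fin m) (Fin m) ℝ) - ((i : ℝ) * ΔT / (J : ℝ)) • Dh m h
      + (ε ^ 2 * (ΔT / (J : ℝ))) • Dh m h ^ 2)⁻¹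
    * ((1 : Matrix (Fin m) (Fin m) ℝ) - ((i : ℝ) * ΔT / (J : ℝ)) • Dh m h)) ^ J

/-- The action of a matrix on `EuclideanSpace ℝ (Fin m)` (i.e. `ℝ^m` with the
Euclidean norm), given by matrix-vector multiplication. -/
noncomputable def act {m : ℕ} (A : Matrix (Fin m) (Fin m) ℝ)
    (U : EuclideanSpace ℝ (Fin m)) : EuclideanSpace ℝ (Fin m) :=
  Matrix.toEuclideanCLM (𝕜 := ℝ) A U

/-- The operator (spectral) norm of a matrix, induced by the Euclidean norm. -/
noncomputable def opNorm {m : ℕ} (A : Matrix (Fin m) (Fin m) ℝ) : ℝ :=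
  ‖Matrix.toEuclideanCLM (𝕜 := ℝ) A‖

/-! ### Auxiliary lemmas -/

open Matrix

section Aux

variable {m : ℕ}

lemma isomPA {m : ℕ} (V : Matrix (Fin m) (Fin m) ℝ) (hV : V ∈ unitary (Matrix (Fin m) (Fin m) ℝ))
    (x : EuclideanSpace ℝ (Fin m)) :
    ‖Matrix.toEuclideanCLM (𝕜 := ℝ) V x‖ = ‖x‖ := by
  have h1 : star V * V = 1 := hV.1
  have h2 : (Matrix.toEuclideanCLM (𝕜 := ℝ) (star V)) = star (Matrix.toEuclideanCLM (𝕜 := ℝ) V) := by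
    simp [map_star]
  have key : ‖Matrix.toEuclideanCLM (𝕜 := ℝ) V x‖ ^ 2 = ‖x‖ ^ 2 := by
    rw [← real_inner_self_eq_norm_sq, ← real_inner_self_eq_norm_sq]
    calc inner ℝ (Matrix.toEuclideanCLM (𝕜 := ℝ) V x) (Matrix.toEuclideanCLM (𝕜 := ℝ) V x)
        = inner ℝ x ((star (Matrix.toEuclideanCLM (𝕜 := ℝ) V)) (Matrix.toEuclideanCLM (𝕜 := ℝ) V x)) := by
          rw [ContinuousLinearMap.star_eq_adjoint, ContinuousLinearMap.adjoint_inner_right]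
      _ = (inner ℝ x x : ℝ) := by rw [← h2, ← ContinuousLinearMap.mul_apply, ← _root_.map_mul, h1,
            _root_.map_one, ContinuousLinearMap.one_apply]
  rw [← Real.sqrt_sq (norm_nonneg _), ← Real.sqrt_sq (norm_nonneg x), key]

lemma diagboundPA {m : ℕ} (d : Fin m → ℝ) (hd : ∀ i, |d i| ≤ 1) (x : EuclideanSpace ℝ (Fin m)) :
    ‖Matrix.toEuclideanCLM (𝕜 := ℝ) (Matrix.diagonal d) x‖ ≤ ‖x‖ := by
  have happ : ∀ i, (Matrix.toEuclideanCLM (𝕜 := ℝ) (Matrix.diagonal d) x) i = d i * x i := by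
    intro i
    have := congrFun (Matrix.ofLp_toEuclideanCLM (𝕜 := ℝ) (Matrix.diagonal d) x) i
    simpa [Matrix.mulVec_diagonal] using this
  rw [EuclideanSpace.norm_eq, EuclideanSpace.norm_eq]
  apply Real.sqrt_le_sqrt
  apply Finset.sum_le_sum
  intro i _
  rw [happ i]
  have h1 : ‖d i * x i‖ ≤ ‖x i‖ := by
    rw [norm_mul]
    calc ‖d i‖ * ‖x i‖ ≤ 1 * ‖x i‖ := by
          apply mul_le_mul_of_nonneg_right _ (norm_nonneg _)
          simpa [Real.norm_eq_abs] using hd i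
      _ = ‖x i‖ := one_mul _
  nlinarith [norm_nonneg (d i * x i), norm_nonneg (x i)]

noncomputable def conjd (V : Matrix (Fin m) (Fin m) ℝ) (d : Fin m → ℝ) : Matrix (Fin m) (Fin m) ℝ :=
  V * diagonal d * star V

lemma conjd_mul (V : Matrix (Fin m) (Fin m) ℝ) (hV : V ∈ unitary (Matrix (Fin m) (Fin m) ℝ))
    (d e : Fin m → ℝ) : conjd V d * conjd V e = conjd V (d * e) := by
  unfold conjd
  have h1 : star V * V = 1 := hV.1
  have : V * diagonal d * star V * (V * diagonal e * star V)
      = V * (diagonal d * ((star V * V) * (diagonal e * star V))) := by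
    simp only [Matrix.mul_assoc]
  rw [this, h1, Matrix.one_mul, show (d * e) = fun i => d i * e i from rfl,
    ← Matrix.diagonal_mul_diagonal]
  simp only [Matrix.mul_assoc]

lemma conjd_one (V : Matrix (Fin m) (Fin m) ℝ) (hV : V ∈ unitary (Matrix (Fin m) (Fin m) ℝ)) :
    conjd V (fun _ => 1) = 1 := by
  unfold conjd
  have : diagonal (fun (_ : Fin m) => (1:ℝ)) = 1 := Matrix.diagonal_one
  rw [this, Matrix.mul_one]
  exact hV.2

lemma conjd_smul (V : Matrix (Fin m) (Fin m) ℝ) (a : ℝ) (d : Fin m → ℝ) :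
    a • conjd V d = conjd V (a • d) := by
  unfold conjd; rw [Matrix.diagonal_smul]; simp [Matrix.smul_mul, Matrix.mul_smul]

lemma conjd_add (V : Matrix (Fin m) (Fin m) ℝ) (d e : Fin m → ℝ) :
    conjd V d + conjd V e = conjd V (d + e) := by
  unfold conjd
  rw [show (d + e) = fun i => d i + e i from rfl, ← Matrix.diagonal_add]
  noncomm_ring

lemma conjd_sub (V : Matrix (Fin m) (Fin m) ℝ) (d e : Fin m → ℝ) :
    conjd V d - conjd V e = conjd V (d - e) := by
  unfold conjd
  rw [show (d - e) = fun i => d i - e i from rfl, ← Matrix.diagonal_sub]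
  noncomm_ring

lemma conjd_pow (V : Matrix (Fin m) (Fin m) ℝ) (hV : V ∈ unitary (Matrix (Fin m) (Fin m) ℝ))
    (d : Fin m → ℝ) (J : ℕ) (hJ : 1 ≤ J) : conjd V d ^ J = conjd V (d ^ J) := by
  induction J with
  | zero => omega
  | succ n ih =>
    rcases Nat.eq_or_lt_of_le hJ with hh | hh
    · simp [← hh, pow_one]
    · have h1 : 1 ≤ n := by omega
      rw [pow_succ, ih h1, conjd_mul V hV, ← pow_succ]

lemma conjd_inv (V : Matrix (Fin m) (Fin m) ℝ) (hV : V ∈ unitary (Matrix (Fin m) (Fin m) ℝ))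
    (d : Fin m → ℝ) (hd : ∀ i, d i ≠ 0) : (conjd V d)⁻¹ = conjd V (fun i => (d i)⁻¹) := by
  unfold conjd
  rw [Matrix.mul_inv_rev, Matrix.mul_inv_rev]
  have hVi : V⁻¹ = star V := Matrix.inv_eq_left_inv hV.1
  have hVsi : (star V)⁻¹ = V := Matrix.inv_eq_left_inv hV.2
  rw [hVi, hVsi, Matrix.inv_diagonal]
  have hu : IsUnit d := by
    refine ⟨⟨d, fun i => (d i)⁻¹, ?_, ?_⟩, rfl⟩ <;> funext i <;>
      simp [mul_inv_cancel₀ (hd i), inv_mul_cancel₀ (hd i)]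
  have h1 : Ring.inverse d * d = 1 := Ring.inverse_mul_cancel d hu
  have : Ring.inverse d = fun i => (d i)⁻¹ := by
    funext i
    exact eq_inv_of_mul_eq_one_left (congrFun h1 i)
  rw [this]
  simp only [Matrix.mul_assoc]

lemma act_conjd_le (V : Matrix (Fin m) (Fin m) ℝ) (hV : V ∈ unitary (Matrix (Fin m) (Fin m) ℝ))
    (d : Fin m → ℝ) (hd : ∀ i, |d i| ≤ 1) (x : EuclideanSpace ℝ (Fin m)) :
    ‖act (conjd V d) x‖ ≤ ‖x‖ := by
  unfold act conjd
  have hsplit : Matrix.toEuclideanCLM (𝕜 := ℝ) (V * diagonal d * star V) x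
      = Matrix.toEuclideanCLM (𝕜 := ℝ) V (Matrix.toEuclideanCLM (𝕜 := ℝ) (diagonal d)
          (Matrix.toEuclideanCLM (𝕜 := ℝ) (star V) x)) := by
    rw [_root_.map_mul, _root_.map_mul]
    rfl
  rw [hsplit, isomPA V hV]
  refine le_trans (diagboundPA d hd _) (le_of_eq ?_)
  exact isomPA (star V) (Unitary.star_mem hV) x

lemma Dh_isHermitian (m : ℕ) (h : ℝ) : (Dh m h).IsHermitian := by
  ext i j
  simp only [Matrix.conjTranspose_apply, Dh, Matrix.of_apply, star_trivial]
  by_cases h1 : (i : ℕ) = (j : ℕ) <;> simp [h1, eq_comm, or_comm]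

lemma card_adjPA (m : ℕ) (i : Fin m) :
    (Finset.univ.filter (fun j : Fin m => (i:ℕ)+1=(j:ℕ) ∨ (j:ℕ)+1=(i:ℕ))).card ≤ 2 := by
  classical
  have hsub : (Finset.univ.filter (fun j : Fin m => (i:ℕ)+1=(j:ℕ) ∨ (j:ℕ)+1=(i:ℕ)))
      ⊆ (Finset.univ.filter (fun j : Fin m => (i:ℕ)+1=(j:ℕ)))
        ∪ (Finset.univ.filter (fun j : Fin m => (j:ℕ)+1=(i:ℕ))) := by
    intro j hj
    simp only [Finset.mem_filter, Finset.mem_union, Finset.mem_univ, true_and] at *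
    tauto
  refine le_trans (Finset.card_le_card hsub) (le_trans (Finset.card_union_le _ _) ?_)
  have h1 : (Finset.univ.filter (fun j : Fin m => (i:ℕ)+1=(j:ℕ))).card ≤ 1 := by
    apply Finset.card_le_one.mpr
    intro a ha b hb
    simp only [Finset.mem_filter] at ha hb
    exact Fin.ext (by omega)
  have h2 : (Finset.univ.filter (fun j : Fin m => (j:ℕ)+1=(i:ℕ))).card ≤ 1 := by
    apply Finset.card_le_one.mpr
    intro a ha b hb
    simp only [Finset.mem_filter] at ha hb
    exact Fin.ext (by omega)
  omega

lemma adj_sum_lePA (m : ℕ) (i : Fin m) (K : ℝ) (hK : 0 ≤ K) :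
    ∑ j : Fin m, (if (i:ℕ)+1=(j:ℕ) ∨ (j:ℕ)+1=(i:ℕ) then K else 0) ≤ 2 * K := by
  classical
  rw [← Finset.sum_filter, Finset.sum_const, nsmul_eq_mul]
  have h2 : ((Finset.univ.filter (fun j : Fin m => (i:ℕ)+1=(j:ℕ) ∨ (j:ℕ)+1=(i:ℕ))).card : ℝ) ≤ 2 := by
    exact_mod_cast card_adjPA m i
  exact mul_le_mul_of_nonneg_right h2 hK

lemma Dh_quad (m : ℕ) (h : ℝ) (x : Fin m → ℝ) :
    x ⬝ᵥ (Dh m h *ᵥ x) ≤ 0 := by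
  classical
  set c := 1 / h ^ 2 with hc
  have hc0 : 0 ≤ c := by positivity
  have expand : x ⬝ᵥ (Dh m h *ᵥ x) = ∑ i, ∑ j, x i * (Dh m h i j * x j) := by
    simp [dotProduct, Matrix.mulVec, Finset.mul_sum]
  rw [expand]
  have key : ∀ i j : Fin m, x i * (Dh m h i j * x j) ≤
      (if (i : ℕ) = (j : ℕ) then c * (-2) * x i ^ 2 else 0)
      + ((if (i : ℕ) + 1 = (j : ℕ) ∨ (j : ℕ) + 1 = (i : ℕ) then c * x i ^ 2 / 2 else 0)
      + (if (i : ℕ) + 1 = (j : ℕ) ∨ (j : ℕ) + 1 = (i : ℕ) then c * x j ^ 2 / 2 else 0)) := by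
    intro i j
    by_cases h1 : (i : ℕ) = (j : ℕ)
    · have h3 : ¬ ((i : ℕ) + 1 = (j : ℕ) ∨ (j : ℕ) + 1 = (i : ℕ)) := by omega
      have hij : i = j := Fin.ext h1
      subst hij
      have h4 : ¬((i:ℕ)+1=(i:ℕ) ∨ (i:ℕ)+1=(i:ℕ)) := by omega
      simp only [Dh, Matrix.of_apply, if_true, h4, if_false, ite_self]
      nlinarith [sq_nonneg (x i)]
    · by_cases h2 : (i : ℕ) + 1 = (j : ℕ) ∨ (j : ℕ) + 1 = (i : ℕ)
      · simp only [Dh, Matrix.of_apply, h1, h2, if_true, if_false]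
        rw [mul_one]
        nlinarith [sq_nonneg (x i - x j)]
      · simp [Dh, h1, h2]
  calc ∑ i, ∑ j, x i * (Dh m h i j * x j)
      ≤ ∑ i : Fin m, ∑ j : Fin m, ((if (i : ℕ) = (j : ℕ) then c * (-2) * x i ^ 2 else 0)
        + ((if (i : ℕ) + 1 = (j : ℕ) ∨ (j : ℕ) + 1 = (i : ℕ) then c * x i ^ 2 / 2 else 0)
        + (if (i : ℕ) + 1 = (j : ℕ) ∨ (j : ℕ) + 1 = (i : ℕ) then c * x j ^ 2 / 2 else 0))) := by
        apply Finset.sum_le_sum; intro i _; apply Finset.sum_le_sum; intro j _; exact key i j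
    _ = (∑ i : Fin m, ∑ j : Fin m, (if (i : ℕ) = (j : ℕ) then c * (-2) * x i ^ 2 else 0))
        + ((∑ i : Fin m, ∑ j : Fin m, (if (i : ℕ) + 1 = (j : ℕ) ∨ (j : ℕ) + 1 = (i : ℕ) then c * x i ^ 2 / 2 else 0))
        + (∑ i : Fin m, ∑ j : Fin m, (if (i : ℕ) + 1 = (j : ℕ) ∨ (j : ℕ) + 1 = (i : ℕ) then c * x j ^ 2 / 2 else 0))) := by
        simp [Finset.sum_add_distrib]
    _ ≤ (∑ i : Fin m, c * (-2) * x i ^ 2) + ((∑ i : Fin m, c * x i ^ 2) + (∑ j : Fin m, c * x j ^ 2)) := by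
        gcongr ?_ + (?_ + ?_)
        · apply le_of_eq
          apply Finset.sum_congr rfl
          intro i _
          have : ∀ j : Fin m, ((i : ℕ) = (j : ℕ)) = (j = i) := by
            intro j; simp [Fin.ext_iff, eq_comm]
          simp only [this]
          rw [Finset.sum_ite_eq' Finset.univ i (fun _ => c * (-2) * x i ^ 2)]
          simp
        · apply Finset.sum_le_sum
          intro i _
          have := adj_sum_lePA m i (c * x i ^ 2 / 2) (by positivity)
          linarith
        · rw [Finset.sum_comm]
          apply Finset.sum_le_sum
          intro j _
          calc ∑ i : Fin m, (if (i:ℕ)+1=(j:ℕ) ∨ (j:ℕ)+1=(i:ℕ) then c * x j ^ 2 / 2 else 0)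
              = ∑ i : Fin m, (if (j:ℕ)+1=(i:ℕ) ∨ (i:ℕ)+1=(j:ℕ) then c * x j ^ 2 / 2 else 0) := by
                apply Finset.sum_congr rfl; intro i _; exact if_congr or_comm rfl rfl
            _ ≤ 2 * (c * x j ^ 2 / 2) := adj_sum_lePA m j _ (by positivity)
            _ = c * x j ^ 2 := by ring
    _ ≤ 0 := by
        have : ∑ i : Fin m, c * (-2) * x i ^ 2 = -2 * ∑ i : Fin m, c * x i ^ 2 := by
          rw [Finset.mul_sum]; apply Finset.sum_congr rfl; intro i _; ring
        rw [this]
        ring_nf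
        linarith

lemma eig_nonpos (m : ℕ) (h : ℝ) (i : Fin m) : (Dh_isHermitian m h).eigenvalues i ≤ 0 := by
  set hD := Dh_isHermitian m h
  set v := hD.eigenvectorBasis i with hv
  have hmv := hD.mulVec_eigenvectorBasis i
  have hq := Dh_quad m h ⇑v
  rw [hmv, dotProduct_smul] at hq
  have h1 : (⇑v ⬝ᵥ ⇑v) = (inner ℝ v v : ℝ) := by
    simp [PiLp.inner_apply, dotProduct, mul_comm]
    rw [EuclideanSpace.norm_sq_eq]; simp [Real.norm_eq_abs, sq_abs, sq]
  have h2 : (inner ℝ v v : ℝ) = 1 := by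
    rw [real_inner_self_eq_norm_sq]
    have := hD.eigenvectorBasis.orthonormal.1 i
    rw [this]; norm_num
  rw [smul_eq_mul, h1, h2, mul_one] at hq
  exact hq

lemma scalPA (a b t : ℝ) (ha : 0 ≤ a) (hb : 0 ≤ b) (ht : t ≤ 0) :
    0 < (1 - a*t + b*t^2)⁻¹ * (1 - a*t) ∧ (1 - a*t + b*t^2)⁻¹ * (1 - a*t) ≤ 1 := by
  have hnum : 0 < 1 - a*t := by nlinarith
  have hden : 0 < 1 - a*t + b*t^2 := by nlinarith
  constructor
  · positivity
  · rw [inv_mul_eq_div, div_le_one hden]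
    nlinarith

lemma denom_ne (a b t : ℝ) (ha : 0 ≤ a) (hb : 0 ≤ b) (ht : t ≤ 0) :
    1 - a*t + b*t^2 ≠ 0 := by
  have : 0 < 1 - a*t + b*t^2 := by nlinarith
  linarith

/-- General functional-calculus identity. -/
lemma ratfun (m : ℕ) (h : ℝ) (a b : ℝ) (ha : 0 ≤ a) (hb : 0 ≤ b) :
    ((1 : Matrix (Fin m) (Fin m) ℝ) - a • Dh m h + b • Dh m h ^ 2)⁻¹
      * ((1 : Matrix (Fin m) (Fin m) ℝ) - a • Dh m h)
    = conjd ((Dh_isHermitian m h).eigenvectorUnitary : Matrix (Fin m) (Fin m) ℝ)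
        (fun i => (1 - a * (Dh_isHermitian m h).eigenvalues i
            + b * ((Dh_isHermitian m h).eigenvalues i) ^ 2)⁻¹
          * (1 - a * (Dh_isHermitian m h).eigenvalues i)) := by
  set hD := Dh_isHermitian m h
  set V : Matrix (Fin m) (Fin m) ℝ := (hD.eigenvectorUnitary : Matrix (Fin m) (Fin m) ℝ) with hVdef
  have hV : V ∈ unitary (Matrix (Fin m) (Fin m) ℝ) := hD.eigenvectorUnitary.2
  set E := hD.eigenvalues with hE
  have hDc : Dh m h = conjd V E := by
    have := hD.spectral_theorem
    unfold conjd
    convert this using 2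
    rfl
  have hnum : (1 : Matrix (Fin m) (Fin m) ℝ) - a • Dh m h
      = conjd V (fun i => 1 - a * E i) := by
    rw [hDc, conjd_smul, ← conjd_one V hV, conjd_sub,
      show ((fun _ : Fin m => (1:ℝ)) - a • E) = (fun i => 1 - a * E i) from
        funext fun i => by simp]
  have hden : (1 : Matrix (Fin m) (Fin m) ℝ) - a • Dh m h + b • Dh m h ^ 2
      = conjd V (fun i => 1 - a * E i + b * E i ^ 2) := by
    have hsq : Dh m h ^ 2 = conjd V (fun i => E i ^ 2) := by
      rw [pow_two, hDc, conjd_mul V hV,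
        show (E * E) = (fun i => E i ^ 2) from funext fun i => (pow_two (E i)).symm]
    rw [hnum, hsq, conjd_smul, conjd_add,
      show ((fun i => 1 - a * E i) + b • fun i => E i ^ 2)
          = (fun i => 1 - a * E i + b * E i ^ 2) from funext fun i => by simp]
  have hne : ∀ i, 1 - a * E i + b * E i ^ 2 ≠ 0 := fun i =>
    denom_ne a b (E i) ha hb (eig_nonpos m h i)
  rw [hden, hnum, conjd_inv V hV _ hne, conjd_mul V hV]
  rfl

lemma Pmat_bound (m : ℕ) (h ΔT ε : ℝ) (hΔT : 0 < ΔT) (x : EuclideanSpace ℝ (Fin m)) :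
    ‖act (Pmat m h ΔT ε 1) x‖ ≤ ‖x‖ := by
  set hD := Dh_isHermitian m h
  have hV : (hD.eigenvectorUnitary : Matrix (Fin m) (Fin m) ℝ) ∈
      unitary (Matrix (Fin m) (Fin m) ℝ) := hD.eigenvectorUnitary.2
  have ha : (0:ℝ) ≤ ((1:ℕ):ℝ) * ΔT := by simp; positivity
  have hb : (0:ℝ) ≤ ε ^ 2 * ΔT := by positivity
  have hrw : Pmat m h ΔT ε 1
      = conjd (hD.eigenvectorUnitary : Matrix (Fin m) (Fin m) ℝ)
        (fun i => (1 - ((1:ℕ):ℝ) * ΔT * hD.eigenvalues i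
            + ε ^ 2 * ΔT * (hD.eigenvalues i) ^ 2)⁻¹
          * (1 - ((1:ℕ):ℝ) * ΔT * hD.eigenvalues i)) := by
    unfold Pmat
    exact ratfun m h (((1:ℕ):ℝ) * ΔT) (ε ^ 2 * ΔT) ha hb
  rw [hrw]
  apply act_conjd_le _ hV
  intro i
  have := scalPA (((1:ℕ):ℝ) * ΔT) (ε ^ 2 * ΔT) (hD.eigenvalues i) ha hb (eig_nonpos m h i)
  rw [abs_le]
  constructor <;> nlinarith [this.1, this.2]

lemma diff_bound (m : ℕ) (h ΔT ε : ℝ) (hΔT : 0 < ΔT) (J : ℕ) (hJ : 2 ≤ J)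
    (x : EuclideanSpace ℝ (Fin m)) :
    ‖act (PJmat m h ΔT ε J 1 - Pmat m h ΔT ε 1) x‖ ≤ ‖x‖ := by
  set hD := Dh_isHermitian m h
  set V : Matrix (Fin m) (Fin m) ℝ := (hD.eigenvectorUnitary : Matrix (Fin m) (Fin m) ℝ) with hVdef
  have hV : V ∈ unitary (Matrix (Fin m) (Fin m) ℝ) := hD.eigenvectorUnitary.2
  set E := hD.eigenvalues with hE
  have hJ0 : (0:ℝ) < (J:ℝ) := by positivity
  have ha : (0:ℝ) ≤ ((1:ℕ):ℝ) * ΔT := by simp; positivity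
  have hb : (0:ℝ) ≤ ε ^ 2 * ΔT := by positivity
  have haJ : (0:ℝ) ≤ ((1:ℕ):ℝ) * ΔT / (J:ℝ) := by positivity
  have hbJ : (0:ℝ) ≤ ε ^ 2 * (ΔT / (J:ℝ)) := by positivity
  set φ : Fin m → ℝ := fun i => (1 - ((1:ℕ):ℝ) * ΔT * E i + ε ^ 2 * ΔT * (E i) ^ 2)⁻¹
      * (1 - ((1:ℕ):ℝ) * ΔT * E i) with hφ
  set ψ0 : Fin m → ℝ := fun i => (1 - ((1:ℕ):ℝ) * ΔT / (J:ℝ) * E i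
      + ε ^ 2 * (ΔT / (J:ℝ)) * (E i) ^ 2)⁻¹
      * (1 - ((1:ℕ):ℝ) * ΔT / (J:ℝ) * E i) with hψ0
  have hP : Pmat m h ΔT ε 1 = conjd V φ := by
    unfold Pmat
    exact ratfun m h (((1:ℕ):ℝ) * ΔT) (ε ^ 2 * ΔT) ha hb
  have hPJ : PJmat m h ΔT ε J 1 = conjd V (ψ0 ^ J) := by
    unfold PJmat
    rw [ratfun m h (((1:ℕ):ℝ) * ΔT / (J:ℝ)) (ε ^ 2 * (ΔT / (J:ℝ))) haJ hbJ]
    exact conjd_pow V hV _ J (by omega)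
  rw [hP, hPJ, conjd_sub]
  apply act_conjd_le V hV
  intro i
  have h1 := scalPA (((1:ℕ):ℝ) * ΔT) (ε ^ 2 * ΔT) (E i) ha hb (eig_nonpos m h i)
  have h2 := scalPA (((1:ℕ):ℝ) * ΔT / (J:ℝ)) (ε ^ 2 * (ΔT / (J:ℝ))) (E i) haJ hbJ
    (eig_nonpos m h i)
  have hψ0i : 0 < ψ0 i ∧ ψ0 i ≤ 1 := h2
  have hψ : 0 < ψ0 i ^ J ∧ ψ0 i ^ J ≤ 1 :=
    ⟨pow_pos hψ0i.1 J, pow_le_one₀ (le_of_lt hψ0i.1) hψ0i.2⟩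
  have hφi : 0 < φ i ∧ φ i ≤ 1 := h1
  have : (ψ0 ^ J - φ) i = ψ0 i ^ J - φ i := by simp
  rw [this, abs_le]
  constructor <;> nlinarith [hψ.1, hψ.2, hφi.1, hφi.2]

end Aux

theorem stmt9 (h ΔT ε : ℝ) (hh : 0 < h) (hΔT : 0 < ΔT) (hε : 0 < ε)
    (m : ℕ) (hm : 1 ≤ m) (J : ℕ) (hJ : 2 ≤ J)
    (u0 : EuclideanSpace ℝ (Fin m)) (U : ℕ → ℕ → EuclideanSpace ℝ (Fin m))
    (h0 : ∀ k, U 0 k = u0)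
    (hrec : ∀ n k, U (n + 1) (k + 1) =
      act (Pmat m h ΔT ε 1) (U n (k + 1))
        + act (PJmat m h ΔT ε J 1 - Pmat m h ΔT ε 1) (U n k)) :
    ∀ n k, ‖U (n + 1) (k + 1)‖ ≤ ‖u0‖ +
      ((n : ℝ) + 1) *
        ((Finset.range (n + 1)).sup' (Finset.nonempty_range_iff.mpr n.succ_ne_zero)
          fun j => ‖U j k‖) := by
  intro n k
  induction n with
  | zero =>
    rw [hrec 0 k, h0 (k+1), h0 k]
    have hsup : ((Finset.range 1).sup' (Finset.nonempty_range_iff.mpr Nat.one_ne_zero)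
        fun j => ‖U j k‖) = ‖U 0 k‖ := by
      simp
    rw [hsup, h0 k]
    push_cast
    calc ‖act (Pmat m h ΔT ε 1) u0 + act (PJmat m h ΔT ε J 1 - Pmat m h ΔT ε 1) u0‖
        ≤ ‖act (Pmat m h ΔT ε 1) u0‖ + ‖act (PJmat m h ΔT ε J 1 - Pmat m h ΔT ε 1) u0‖ :=
          norm_add_le _ _
      _ ≤ ‖u0‖ + ‖u0‖ := add_le_add (Pmat_bound m h ΔT ε hΔT u0)
          (diff_bound m h ΔT ε hΔT J hJ u0)
      _ ≤ ‖u0‖ + (0 + 1) * ‖u0‖ := le_of_eq (by ring)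
  | succ n ih =>
    have hmono : ((Finset.range (n + 1)).sup' (Finset.nonempty_range_iff.mpr n.succ_ne_zero)
          fun j => ‖U j k‖)
        ≤ ((Finset.range (n + 2)).sup' (Finset.nonempty_range_iff.mpr (n+1).succ_ne_zero)
          fun j => ‖U j k‖) := by
      apply Finset.sup'_mono
      exact Finset.range_subset_range.mpr (by omega)
    set S := ((Finset.range (n + 2)).sup' (Finset.nonempty_range_iff.mpr (n+1).succ_ne_zero)
        fun j => ‖U j k‖) with hS
    have hmem : ‖U (n+1) k‖ ≤ S := by
      rw [hS]
      exact Finset.le_sup' (fun j => ‖U j k‖) (Finset.self_mem_range_succ (n+1))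
    have hS0 : 0 ≤ S := le_trans (norm_nonneg _) hmem
    rw [hrec (n+1) k]
    calc ‖act (Pmat m h ΔT ε 1) (U (n+1) (k+1))
          + act (PJmat m h ΔT ε J 1 - Pmat m h ΔT ε 1) (U (n+1) k)‖
        ≤ ‖act (Pmat m h ΔT ε 1) (U (n+1) (k+1))‖
          + ‖act (PJmat m h ΔT ε J 1 - Pmat m h ΔT ε 1) (U (n+1) k)‖ := norm_add_le _ _
      _ ≤ ‖U (n+1) (k+1)‖ + ‖U (n+1) k‖ := add_le_add
          (Pmat_bound m h ΔT ε hΔT _) (diff_bound m h ΔT ε hΔT J hJ _)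
      _ ≤ (‖u0‖ + ((n : ℝ) + 1) * ((Finset.range (n + 1)).sup'
            (Finset.nonempty_range_iff.mpr n.succ_ne_zero) fun j => ‖U j k‖)) + S :=
          add_le_add ih hmem
      _ ≤ (‖u0‖ + ((n : ℝ) + 1) * S) + S := by
          have : ((n : ℝ) + 1) * ((Finset.range (n + 1)).sup'
              (Finset.nonempty_range_iff.mpr n.succ_ne_zero) fun j => ‖U j k‖)
              ≤ ((n : ℝ) + 1) * S := by
            apply mul_le_mul_of_nonneg_left hmono
            positivity
          linarith
      _ = ‖u0‖ + (((n:ℝ) + 1) + 1) * S := by ring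
      _ = ‖u0‖ + ((((n:ℕ):ℝ) + 1) + 1) * S := by norm_num
      _ = ‖u0‖ + ((((n+1:ℕ)):ℝ) + 1) * S := by push_cast; ring
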